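/- For every w ∈ (0, 1] and every natural number k ≥ 1, (1 − (1−w)^k)/w ≥ min{k/2, 1/(2w)}. -/

import Mathlib

/-- For `w ∈ (0,1]` and `k ≥ 1`, `(1 − (1−w)^k)/w ≥ min{k/2, 1/(2w)}`. -/
theorem cascade_mean_lower_bound (w : ℝ) (hw0 : 0 < w) (hw1 : w ≤ 1) (k : ℕ) (hk : 1 ≤ k) :
    min ((k : ℝ) / 2) (1 / (2 * w)) ≤ (1 - (1 - w) ^ k) / w := by
  set p := (1 - w) ^ k with hp
  have hp0 : 0 ≤ p := pow_nonneg (by linarith) k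
  have hp1 : p ≤ 1 := pow_le_one₀ (by linarith) (by linarith)
  have key : p * (1 + (k : ℝ) * w) ≤ 1 := by
    calc p * (1 + (k : ℝ) * w) ≤ p * (1 + w) ^ k := by
          exact mul_le_mul_of_nonneg_left (one_add_mul_le_pow (by linarith) k) hp0
      _ = ((1 - w) * (1 + w)) ^ k := by rw [hp, ← mul_pow]
      _ = (1 - w ^ 2) ^ k := by ring_nf
      _ ≤ 1 := pow_le_one₀ (by nlinarith) (by nlinarith)
  rw [le_div_iff₀ hw0]
  rcases le_total ((k : ℝ) * w) 1 with h | h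
  · have hmin : min ((k : ℝ) / 2) (1 / (2 * w)) * w ≤ (k : ℝ) / 2 * w :=
      mul_le_mul_of_nonneg_right (min_le_left _ _) hw0.le
    nlinarith [mul_nonneg (sub_nonneg.2 h) (sub_nonneg.2 hp1)]
  · have h12 : 1 / (2 * w) * w = 1 / 2 := by field_simp
    have hmin : min ((k : ℝ) / 2) (1 / (2 * w)) * w ≤ 1 / 2 := by
      calc min ((k : ℝ) / 2) (1 / (2 * w)) * w ≤ 1 / (2 * w) * w :=
            mul_le_mul_of_nonneg_right (min_le_right _ _) hw0.le
        _ = 1 / 2 := h12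
    nlinarith [mul_nonneg hp0 (sub_nonneg.2 h)]
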